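/- For any path p on a set X and any function f : X → Y, the paths f ∘ ♮p and f ∘ p on Y are stutter equivalent: f ∘ ♮p ∼ f ∘ p. -/

import Mathlib

open scoped Classical ENNReal

namespace PaperBB

/-! ## Paths -/

/-- Words over the alphabet `A_τ = A ∪ {τ}`; `none` plays the role of the silent action `τ`. -/
abbrev Word (A : Type*) := List (Option A)

/-- A path on `X`: a function whose codomain is `X` and whose domain is the set of all
prefixes of some word `σ ∈ A_τ*`. -/
structure Path (A : Type*) (X : Type*) where
  word : Word A
  fn : {σ : Word A // σ <+: word} → X

namespace Path

variable {A X Y : Type*}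

theorem prefixSnoc (σ : Word A) (a : Option A) : σ <+: σ ++ [a] := ⟨[a], rfl⟩

theorem nilPrefix (w : Word A) : ([] : Word A) <+: w := ⟨w, rfl⟩

/-- The value `p(ε)` of a path at the empty word. -/
def start (p : Path A X) : X := p.fn ⟨[], nilPrefix _⟩

/-- The trace of a path: the maximal word in its domain. -/
def trace (p : Path A X) : Word A := p.word

/-- The last state reached by a path: `last p = p (trace p)`. -/
def last (p : Path A X) : X := p.fn ⟨p.word, List.prefix_refl _⟩

/-- `Path(f)(p) = f ∘ p`. -/
def map (f : X → Y) (p : Path A X) : Path A Y := ⟨p.word, fun σ => f (p.fn σ)⟩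

/-- The prefix order on paths: `p ⪯ q` iff `dom p ⊆ dom q` and `q` agrees with `p` on `dom p`. -/
def le (p q : Path A X) : Prop :=
  ∃ h : p.word <+: q.word, ∀ (σ : Word A) (hσ : σ <+: p.word),
    q.fn ⟨σ, hσ.trans h⟩ = p.fn ⟨σ, hσ⟩

/-- The strict prefix order on paths. -/
def lt (p q : Path A X) : Prop := p.le q ∧ p ≠ q

/-- `φ` is a stutter basis for the path `p`. -/
def IsStutterBasis (p : Path A X) (φ : {σ : Word A // σ <+: p.word} → Word A) : Prop :=
  φ ⟨[], nilPrefix _⟩ = [] ∧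
  (∀ (σ : Word A) (h : σ ++ [(none : Option A)] <+: p.word),
      (p.fn ⟨σ ++ [none], h⟩ = p.fn ⟨σ, (prefixSnoc σ none).trans h⟩ →
        φ ⟨σ ++ [none], h⟩ = φ ⟨σ, (prefixSnoc σ none).trans h⟩) ∧
      (p.fn ⟨σ ++ [none], h⟩ ≠ p.fn ⟨σ, (prefixSnoc σ none).trans h⟩ →
        φ ⟨σ ++ [none], h⟩ = φ ⟨σ, (prefixSnoc σ none).trans h⟩ ++ [none])) ∧
  (∀ (σ : Word A) (a : A) (h : σ ++ [some a] <+: p.word),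
      φ ⟨σ ++ [some a], h⟩ = φ ⟨σ, (prefixSnoc σ (some a)).trans h⟩ ++ [some a])

/-- Auxiliary recursion computing the stutter basis of `p` on the prefix of length `n`. -/
noncomputable def stutterWordAux (p : Path A X) : ℕ → Word A
  | 0 => []
  | n + 1 =>
    if h : n < p.word.length then
      if (p.word.get ⟨n, h⟩) = none ∧
          p.fn ⟨p.word.take (n + 1), List.take_prefix _ _⟩ =
            p.fn ⟨p.word.take n, List.take_prefix _ _⟩ then
        stutterWordAux p n
      else stutterWordAux p n ++ [p.word.get ⟨n, h⟩]
    else []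

/-- The (unique) stutter basis of a path `p`. -/
noncomputable def stutterBasis (p : Path A X) (σ : {σ : Word A // σ <+: p.word}) : Word A :=
  stutterWordAux p σ.1.length

/-- The stutter invariant path `♮p` relative to `p`: its domain is the image of the stutter
basis `φ` and it satisfies `♮p ∘ φ = p`. -/
noncomputable def stutter (p : Path A X) : Path A X where
  word := stutterBasis p ⟨p.word, List.prefix_refl _⟩
  fn := fun w =>
    haveI : Nonempty {σ : Word A // σ <+: p.word} := ⟨⟨[], nilPrefix _⟩⟩
    p.fn (Function.invFun (stutterBasis p) w.1)

end Path

/-- Stutter equivalence of paths: `p ∼ q` iff `♮p = ♮q`. -/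
def StutterEquiv {A X : Type*} (p q : Path A X) : Prop := p.stutter = q.stutter

instance pathSetoid (A X : Type*) : Setoid (Path A X) :=
  ⟨StutterEquiv, ⟨fun _ => rfl, Eq.symm, Eq.trans⟩⟩

/-- The set `Path_∼(X)` of paths up to stutter equivalence. -/
abbrev PathQuot (A X : Type*) := Quotient (pathSetoid A X)

/-- The quotient map `π : Path(X) → Path_∼(X)`. -/
def PathQuot.mk {A X : Type*} (p : Path A X) : PathQuot A X := Quotient.mk _ p

/-- `Path_∼(f)[p] = [f ∘ p]`. -/
noncomputable def PathQuot.map {A X Y : Type*} (f : X → Y) (c : PathQuot A X) : PathQuot A Y :=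
  PathQuot.mk (Path.map f c.out)

/-- The order on `Path_∼(X)`: `[p] ⪯ [q]` iff `♮p ⪯ ♮q`. -/
def PathQuot.le {A X : Type*} (c d : PathQuot A X) : Prop :=
  ∃ p q : Path A X, PathQuot.mk p = c ∧ PathQuot.mk q = d ∧ p.stutter.le q.stutter

/-- The set of words of the shape `τ*aτ*`. -/
def TauStarATauStar {A : Type*} (a : A) (w : Word A) : Prop :=
  ∃ n m : ℕ, w = List.replicate n none ++ some a :: List.replicate m none

/-! ## Prefix orders, the sobrification `X∞`, Scott topology, valuations -/

section OrderTheory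

variable {Z : Type*}

/-- Downward-closed subsets: the closed sets of the Alexandroff topology. -/
def IsDownClosed [Preorder Z] (C : Set Z) : Prop :=
  ∀ ⦃x⦄, x ∈ C → ∀ ⦃y⦄, y ≤ x → y ∈ C

/-- Irreducible closed subsets of the Alexandroff topology. -/
def IsIrredClosed [Preorder Z] (C : Set Z) : Prop :=
  IsDownClosed C ∧ C.Nonempty ∧
    ∀ C₁ C₂ : Set Z, IsDownClosed C₁ → IsDownClosed C₂ → C = C₁ ∪ C₂ → C = C₁ ∨ C = C₂

/-- A set is non-sober if it is irreducible and closed (w.r.t. the Alexandroff topology) but is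
not the closure (the principal ideal) of any single point. -/
def NonSober [Preorder Z] (C : Set Z) : Prop :=
  IsIrredClosed C ∧ ¬ ∃ x : Z, C = {y | y ≤ x}

/-- `X∞`: `X` together with a fresh limit point `∞_C` for every non-sober `C ⊆ X`. -/
def Extended (Z : Type*) [Preorder Z] := Z ⊕ {C : Set Z // NonSober C}

/-- The order `⪯'` on `X∞` extending `⪯` by `∞_C ⪯' ∞_C` and `x ⪯' ∞_C` for `x ∈ C`. -/
def extLE [Preorder Z] : Extended Z → Extended Z → Prop
  | Sum.inl x, Sum.inl y => x ≤ y
  | Sum.inl x, Sum.inr C => x ∈ C.1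
  | Sum.inr _, Sum.inl _ => False
  | Sum.inr C, Sum.inr D => C = D

instance [PartialOrder Z] : PartialOrder (Extended Z) where
  le := extLE
  le_refl a := by
    cases a with
    | inl x => exact le_refl x
    | inr C => exact rfl
  le_trans a b c hab hbc := by
    cases a with
    | inl x =>
      cases b with
      | inl y =>
        cases c with
        | inl z => exact le_trans hab hbc
        | inr C => exact C.2.1.1 hbc hab
      | inr C =>
        cases c with
        | inl z => exact False.elim hbc
        | inr D => exact (show C = D from hbc) ▸ hab
    | inr C =>
      cases b with
      | inl y => exact False.elim hab
      | inr D =>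
        cases c with
        | inl z => exact False.elim hbc
        | inr E => exact (show C = D from hab).trans (show D = E from hbc)
  le_antisymm a b hab hba := by
    cases a with
    | inl x =>
      cases b with
      | inl y => exact congrArg Sum.inl (le_antisymm hab hba)
      | inr C => exact False.elim hba
    | inr C =>
      cases b with
      | inl y => exact False.elim hab
      | inr D => exact congrArg Sum.inr hab

/-- Scott-open subsets: upward closed and inaccessible by directed joins. -/
def ScottOpen {W : Type*} [Preorder W] (U : Set W) : Prop :=
  (∀ ⦃x y⦄, x ∈ U → x ≤ y → y ∈ U) ∧
  ∀ D : Set W, D.Nonempty → DirectedOn (· ≤ ·) D → ∀ s : W, IsLUB D s → s ∈ U →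
    (D ∩ U).Nonempty

/-- Scott-closed subsets. -/
def ScottClosed {W : Type*} [Preorder W] (C : Set W) : Prop := ScottOpen Cᶜ

end OrderTheory

section Valuation

variable {W : Type*}

/-- A valuation on a collection `Op` of open sets: strict, monotone and modular. -/
def IsValuationOn (Op : Set (Set W)) (μ : Set W → ℝ≥0∞) : Prop :=
  μ ∅ = 0 ∧
  (∀ U ∈ Op, ∀ V ∈ Op, U ⊆ V → μ U ≤ μ V) ∧
  (∀ U ∈ Op, ∀ V ∈ Op, μ U + μ V = μ (U ∪ V) + μ (U ∩ V))

/-- Scott continuity of a valuation: it commutes with unions of directed families of opens. -/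
def IsScottContinuousOn (Op : Set (Set W)) (μ : Set W → ℝ≥0∞) : Prop :=
  ∀ 𝒟 : Set (Set W), 𝒟.Nonempty → (∀ U ∈ 𝒟, U ∈ Op) → DirectedOn (· ⊆ ·) 𝒟 →
    μ (⋃₀ 𝒟) = ⨆ U ∈ 𝒟, μ U

/-- Local finiteness: every point has a finitely valued open neighbourhood. -/
def IsLocallyFiniteOn (Op : Set (Set W)) (μ : Set W → ℝ≥0∞) : Prop :=
  ∀ x : W, ∃ U ∈ Op, x ∈ U ∧ μ U < ⊤

/-- The open sets of the Alexandroff topology of a preorder: the upward-closed sets. -/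
def UpClosedSets (W : Type*) [Preorder W] : Set (Set W) :=
  {U | ∀ ⦃x y⦄, x ∈ U → x ≤ y → y ∈ U}

/-- The Scott-open subsets of a preorder. -/
def ScottOpens (W : Type*) [Preorder W] : Set (Set W) := {U | ScottOpen U}

end Valuation

/-- The separation closure `U* = {x ∈ U | cl {x} ∩ U = {x}}` of a subset of a
topological space. -/
def sepClosure {W : Type*} [TopologicalSpace W] (U : Set W) : Set W :=
  {x ∈ U | closure {x} ∩ U = {x}}

/-! ## Fully probabilistic transition systems -/

section Prob

variable {A X : Type*}

/-- A fully probabilistic transition system. -/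
structure FPTS (A X : Type*) where
  P : X → Option A → X → ℝ≥0∞
  le_one : ∀ x a y, P x a y ≤ 1
  finite_support : ∀ x : X, {q : Option A × X | 0 < P x q.1 q.2}.Finite
  total : ∀ x : X,
    (∑' q : Option A × X, P x q.1 q.2) = 0 ∨ (∑' q : Option A × X, P x q.1 q.2) = 1

/-- `p` is an execution from `x`. -/
def IsExec (S : FPTS A X) (x : X) (p : Path A X) : Prop :=
  p.start = x ∧
  ∀ (σ : Word A) (a : Option A) (h : σ ++ [a] <+: p.word),
    0 < S.P (p.fn ⟨σ, (Path.prefixSnoc σ a).trans h⟩) a (p.fn ⟨σ ++ [a], h⟩)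

/-- The weight function `μ_P` on paths: the product of the transition probabilities along an
execution, and `0` on paths that are not executions. -/
noncomputable def pathWeight (S : FPTS A X) (p : Path A X) : ℝ≥0∞ :=
  if ∃ x : X, IsExec S x p then
    ∏ i : Fin p.word.length,
      S.P (p.fn ⟨p.word.take i.1, List.take_prefix _ _⟩)
          (p.word.get i)
          (p.fn ⟨p.word.take (i.1 + 1), List.take_prefix _ _⟩)
  else 0

/-- `x →_L Y`: executions from `x` with trace in `L`, last state in `Y`, and no strict prefix
witnessing the same. -/
def stepSet (S : FPTS A X) (x : X) (L : Set (Word A)) (Y : Set X) : Set (Path A X) :=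
  {p | IsExec S x p ∧ p.trace ∈ L ∧ p.last ∈ Y ∧
       ∀ q : Path A X, q.lt p → q.trace ∈ L → q.last ∉ Y}

/-- `x ⇒_L Y`: paths starting in `x` with trace in `L` and last state in `Y`. -/
def reachSet (x : X) (L : Set (Word A)) (Y : Set X) : Set (Path A X) :=
  {p | p.start = x ∧ p.trace ∈ L ∧ p.last ∈ Y}

/-- The separation closure `U*` of a set of paths (w.r.t. the prefix order). -/
def sepMin (U : Set (Path A X)) : Set (Path A X) :=
  {p ∈ U | ∀ q ∈ U, q.le p → q = p}

/-- The upward-closed sets of paths: the opens of the Alexandroff topology on `Path(X)`. -/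
def pathUpSets (A X : Type*) : Set (Set (Path A X)) :=
  {U | ∀ p ∈ U, ∀ q : Path A X, p.le q → q ∈ U}

end Prob

/-! ## Labelled transition systems -/

section LTS

variable {A X : Type}

/-- `p` is an execution of the labelled transition system `Tr` from `x`. -/
def IsExecLTS (Tr : X → Option A → X → Prop) (x : X) (p : Path A X) : Prop :=
  p.start = x ∧
  ∀ (σ : Word A) (a : Option A) (h : σ ++ [a] <+: p.word),
    Tr (p.fn ⟨σ, (Path.prefixSnoc σ a).trans h⟩) a (p.fn ⟨σ ++ [a], h⟩)

/-- Branching bisimulation. -/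
def IsBranchingBisim (Tr : X → Option A → X → Prop) (R : X → X → Prop) : Prop :=
  Symmetric R ∧
  ∀ (x x' y : X) (a : Option A), Tr x a x' → R x y →
    (a = none ∧ R x' y) ∨
    ∃ y' y'' : X, Relation.ReflTransGen (fun u v => Tr u none v) y y' ∧
      Tr y' a y'' ∧ R x y' ∧ R x' y''

/-- Two states are branching bisimilar if some branching bisimulation relates them. -/
def BranchingBisimilar (Tr : X → Option A → X → Prop) (x x' : X) : Prop :=
  ∃ R : X → X → Prop, IsBranchingBisim Tr R ∧ R x x'

/-- The path-based coalgebra `α : X → P(Path_∼ X)` of a labelled transition system: the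
stutter classes of executions from `x` with trace in `τ*a` (for some `a ∈ A`) or in `τ*`. -/
def ltsAlpha (Tr : X → Option A → X → Prop) (x : X) : Set (PathQuot A X) :=
  {c | ∃ p : Path A X, IsExecLTS Tr x p ∧
    ((∃ (a : A) (n : ℕ), p.word = List.replicate n none ++ [some a]) ∨
     (∃ n : ℕ, p.word = List.replicate n (none : Option A))) ∧
    c = PathQuot.mk p}

end LTS

namespace Path

variable {A X Y : Type*}

theorem ext' {p q : Path A X} (hw : p.word = q.word)
    (hf : ∀ (σ : Word A) (h1 : σ <+: p.word) (h2 : σ <+: q.word),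
      p.fn ⟨σ, h1⟩ = q.fn ⟨σ, h2⟩) : p = q := by
  obtain ⟨w1, f1⟩ := p
  obtain ⟨w2, f2⟩ := q
  dsimp at hw
  subst hw
  simp only [mk.injEq, heq_eq_eq, true_and]
  funext σ
  obtain ⟨s, hs⟩ := σ
  exact hf s hs hs

theorem fn_congr (p : Path A X) {σ τ : Word A} (h : σ = τ) (hσ : σ <+: p.word) :
    p.fn ⟨σ, hσ⟩ = p.fn ⟨τ, h ▸ hσ⟩ := by subst h; rfl

theorem sw_succ_pos (p : Path A X) {k : ℕ} (hk : k < p.word.length)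
    (h1 : p.word.get ⟨k, hk⟩ = none)
    (h2 : p.fn ⟨p.word.take (k + 1), List.take_prefix _ _⟩ =
      p.fn ⟨p.word.take k, List.take_prefix _ _⟩) :
    stutterWordAux p (k + 1) = stutterWordAux p k := by
  rw [stutterWordAux, dif_pos hk, if_pos ⟨h1, h2⟩]

theorem sw_succ_neg (p : Path A X) {k : ℕ} (hk : k < p.word.length)
    (hc : ¬(p.word.get ⟨k, hk⟩ = none ∧
      p.fn ⟨p.word.take (k + 1), List.take_prefix _ _⟩ =
        p.fn ⟨p.word.take k, List.take_prefix _ _⟩)) :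
    stutterWordAux p (k + 1) = stutterWordAux p k ++ [p.word.get ⟨k, hk⟩] := by
  rw [stutterWordAux, dif_pos hk, if_neg hc]

theorem sw_succ_cases (p : Path A X) {k : ℕ} (hk : k < p.word.length) :
    stutterWordAux p (k + 1) = stutterWordAux p k ∨
    stutterWordAux p (k + 1) = stutterWordAux p k ++ [p.word.get ⟨k, hk⟩] := by
  by_cases hc : p.word.get ⟨k, hk⟩ = none ∧
      p.fn ⟨p.word.take (k + 1), List.take_prefix _ _⟩ =
        p.fn ⟨p.word.take k, List.take_prefix _ _⟩
  · exact Or.inl (sw_succ_pos p hk hc.1 hc.2)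
  · exact Or.inr (sw_succ_neg p hk hc)

theorem sw_prefix (p : Path A X) {m n : ℕ} (hmn : m ≤ n) (hn : n ≤ p.word.length) :
    stutterWordAux p m <+: stutterWordAux p n := by
  induction n with
  | zero =>
    obtain rfl := Nat.le_zero.mp hmn
    exact List.prefix_refl _
  | succ k ih =>
    rcases Nat.eq_or_lt_of_le hmn with h | h
    · subst h; exact List.prefix_refl _
    · have hk : k < p.word.length := hn
      have hpre := ih (Nat.lt_succ_iff.mp h) (Nat.le_of_lt hk)
      rcases sw_succ_cases p hk with e | e
      · rw [e]; exact hpre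
      · rw [e]; exact hpre.trans (List.prefix_append _ _)

theorem sw_fn_eq_le (p : Path A X) {m n : ℕ} (hmn : m ≤ n) (hn : n ≤ p.word.length)
    (h : stutterWordAux p m = stutterWordAux p n) :
    p.fn ⟨p.word.take m, List.take_prefix _ _⟩ =
      p.fn ⟨p.word.take n, List.take_prefix _ _⟩ := by
  induction n with
  | zero => obtain rfl := Nat.le_zero.mp hmn; rfl
  | succ k ih =>
    rcases Nat.eq_or_lt_of_le hmn with hm | hm
    · subst hm; rfl
    · have hmk : m ≤ k := Nat.lt_succ_iff.mp hm
      have hk : k < p.word.length := hn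
      by_cases hc : p.word.get ⟨k, hk⟩ = none ∧
          p.fn ⟨p.word.take (k + 1), List.take_prefix _ _⟩ =
            p.fn ⟨p.word.take k, List.take_prefix _ _⟩
      · rw [sw_succ_pos p hk hc.1 hc.2] at h
        exact (ih hmk (Nat.le_of_lt hk) h).trans hc.2.symm
      · exfalso
        rw [sw_succ_neg p hk hc] at h
        have hpre := sw_prefix p hmk (Nat.le_of_lt hk)
        have h1 : (stutterWordAux p k ++ [p.word.get ⟨k, hk⟩]).length ≤
            (stutterWordAux p k).length := by
          rw [← h]; exact hpre.length_le
        simp at h1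

theorem sw_fn_eq (p : Path A X) {m n : ℕ} (hm : m ≤ p.word.length) (hn : n ≤ p.word.length)
    (h : stutterWordAux p m = stutterWordAux p n) :
    p.fn ⟨p.word.take m, List.take_prefix _ _⟩ =
      p.fn ⟨p.word.take n, List.take_prefix _ _⟩ := by
  rcases le_total m n with h' | h'
  · exact sw_fn_eq_le p h' hn h
  · exact (sw_fn_eq_le p h' hm h.symm).symm

theorem sw_surj (p : Path A X) {n : ℕ} (hn : n ≤ p.word.length) {u : Word A}
    (hu : u <+: stutterWordAux p n) : ∃ m, m ≤ n ∧ stutterWordAux p m = u := by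
  induction n with
  | zero =>
    refine ⟨0, le_refl _, ?_⟩
    have : u = [] := List.prefix_nil.mp (by simpa [stutterWordAux] using hu)
    simp [stutterWordAux, this]
  | succ k ih =>
    have hk : k < p.word.length := hn
    rcases sw_succ_cases p hk with e | e
    · rw [e] at hu
      obtain ⟨m, hm, he⟩ := ih (Nat.le_of_lt hk) hu
      exact ⟨m, hm.trans (Nat.le_succ k), he⟩
    · rw [e] at hu
      rcases List.prefix_concat_iff.mp hu with h | h
      · exact ⟨k + 1, le_refl _, by rw [e, h]⟩
      · obtain ⟨m, hm, he⟩ := ih (Nat.le_of_lt hk) h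
        exact ⟨m, hm.trans (Nat.le_succ k), he⟩

theorem stutter_word (p : Path A X) :
    (stutter p).word = stutterWordAux p p.word.length := rfl

theorem stutter_fn_eq (p : Path A X) {n : ℕ} (hn : n ≤ p.word.length)
    (h : stutterWordAux p n <+: (stutter p).word) :
    (stutter p).fn ⟨stutterWordAux p n, h⟩ =
      p.fn ⟨p.word.take n, List.take_prefix _ _⟩ := by
  haveI : Nonempty {σ : Word A // σ <+: p.word} := ⟨⟨[], nilPrefix _⟩⟩
  have hex : ∃ σ : {σ : Word A // σ <+: p.word}, stutterBasis p σ = stutterWordAux p n :=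
    ⟨⟨p.word.take n, List.take_prefix _ _⟩, by
      simp [stutterBasis, Nat.min_eq_left hn]⟩
  have hinv := Function.invFun_eq hex
  show p.fn (Function.invFun (stutterBasis p) (stutterWordAux p n)) = _
  set σ := Function.invFun (stutterBasis p) (stutterWordAux p n) with hσ
  have hlen : σ.1.length ≤ p.word.length := σ.2.length_le
  have hσtake : σ.1 = p.word.take σ.1.length := List.prefix_iff_eq_take.mp σ.2
  have h1 : p.fn σ = p.fn ⟨p.word.take σ.1.length, List.take_prefix _ _⟩ := by
    congr 1
    exact Subtype.ext hσtake
  rw [h1]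
  exact sw_fn_eq p hlen hn hinv

/-- Key induction: the stutter word of `f ∘ p` at stage `n` equals the stutter word of
`f ∘ ♮p` at the stage given by the length of the stutter word of `p` at stage `n`. -/
theorem sw_map_stutter (p : Path A X) (f : X → Y) {n : ℕ} (hn : n ≤ p.word.length) :
    stutterWordAux (p.map f) n =
      stutterWordAux ((p.stutter).map f) (stutterWordAux p n).length := by
  induction n with
  | zero => rfl
  | succ k ih =>
    have hk : k < p.word.length := hn
    have hkle : k ≤ p.word.length := Nat.le_of_lt hk
    have ih' := ih hkle
    set q := p.stutter with hq
    set a := p.word.get ⟨k, hk⟩ with ha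
    -- values of p on the relevant prefixes
    by_cases hst : p.word.get ⟨k, hk⟩ = none ∧
        p.fn ⟨p.word.take (k + 1), List.take_prefix _ _⟩ =
          p.fn ⟨p.word.take k, List.take_prefix _ _⟩
    · -- p stutters at step k
      have hA : stutterWordAux p (k + 1) = stutterWordAux p k := sw_succ_pos p hk hst.1 hst.2
      have hfA : stutterWordAux (p.map f) (k + 1) = stutterWordAux (p.map f) k :=
        sw_succ_pos (p.map f) hk hst.1 (congrArg f hst.2)
      rw [hA, hfA]
      exact ih'
    · -- p makes a real step at k
      have hB : stutterWordAux p (k + 1) = stutterWordAux p k ++ [a] :=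
        sw_succ_neg p hk hst
      set k' := (stutterWordAux p k).length with hk'
      have hlen1 : (stutterWordAux p (k + 1)).length = k' + 1 := by
        rw [hB]; simp [hk']
      -- sw p (k+1) is a prefix of q.word
      have hq1 : stutterWordAux p (k + 1) <+: q.word :=
        sw_prefix p hn (le_refl _)
      have hq0 : stutterWordAux p k <+: q.word :=
        sw_prefix p hkle (le_refl _)
      have hk'lt : k' < q.word.length := by
        have := hq1.length_le
        omega
      -- the letter of q at position k' is a
      have hget : q.word.get ⟨k', hk'lt⟩ = a := by
        have h1 : (stutterWordAux p (k + 1))[k']'(by omega) =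
            q.word[k']'hk'lt := hq1.getElem (by omega)
        show q.word[k']'hk'lt = a
        rw [← h1]
        have : (stutterWordAux p (k + 1))[k']'(by omega) =
            (stutterWordAux p k ++ [a])[k']'(by rw [← hB]; omega) := by
          simp only [hB]
        rw [this]
        exact List.getElem_concat_length rfl _
      -- prefixes of q.word
      have hqtake0 : q.word.take k' = stutterWordAux p k :=
        (List.prefix_iff_eq_take.mp hq0).symm
      have hqtake1 : q.word.take (k' + 1) = stutterWordAux p (k + 1) := by
        have := List.prefix_iff_eq_take.mp hq1
        rw [hlen1] at this
        exact this.symm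
      -- values of q on these prefixes
      have hqfn0 : q.fn ⟨q.word.take k', List.take_prefix _ _⟩ =
          p.fn ⟨p.word.take k, List.take_prefix _ _⟩ := by
        rw [fn_congr q hqtake0 (List.take_prefix _ _)]
        exact stutter_fn_eq p hkle _
      have hqfn1 : q.fn ⟨q.word.take (k' + 1), List.take_prefix _ _⟩ =
          p.fn ⟨p.word.take (k + 1), List.take_prefix _ _⟩ := by
        rw [fn_congr q hqtake1 (List.take_prefix _ _)]
        exact stutter_fn_eq p hn _
      rw [hlen1]
      by_cases hfs : a = none ∧
          f (p.fn ⟨p.word.take (k + 1), List.take_prefix _ _⟩) =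
            f (p.fn ⟨p.word.take k, List.take_prefix _ _⟩)
      · -- f merges the two states: both sides stutter
        have hfp : stutterWordAux (p.map f) (k + 1) = stutterWordAux (p.map f) k :=
          sw_succ_pos (p.map f) hk hfs.1 hfs.2
        have hfq : stutterWordAux (q.map f) (k' + 1) = stutterWordAux (q.map f) k' := by
          refine sw_succ_pos (q.map f) hk'lt ?_ ?_
          · show q.word.get ⟨k', hk'lt⟩ = none
            rw [hget]; exact hfs.1
          · show f (q.fn ⟨q.word.take (k' + 1), List.take_prefix _ _⟩) =
              f (q.fn ⟨q.word.take k', List.take_prefix _ _⟩)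
            rw [hqfn0, hqfn1]
            exact hfs.2
        rw [hfp, hfq]
        exact ih'
      · -- both sides make a real step
        have hfp : stutterWordAux (p.map f) (k + 1) =
            stutterWordAux (p.map f) k ++ [a] := by
          refine sw_succ_neg (p.map f) hk ?_
          exact hfs
        have hfq : stutterWordAux (q.map f) (k' + 1) =
            stutterWordAux (q.map f) k' ++ [q.word.get ⟨k', hk'lt⟩] := by
          refine sw_succ_neg (q.map f) hk'lt ?_
          intro hcon
          apply hfs
          refine ⟨by rw [← hget]; exact hcon.1, ?_⟩
          have h2 : f (q.fn ⟨q.word.take (k' + 1), List.take_prefix _ _⟩) =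
              f (q.fn ⟨q.word.take k', List.take_prefix _ _⟩) := hcon.2
          rw [hqfn0, hqfn1] at h2
          exact h2
        rw [hfp, hfq, hget, ih']

end Path

theorem stmt3 {A X Y : Type*} (p : Path A X) (f : X → Y) :
    StutterEquiv (p.stutter.map f) (p.map f) := by
  show (p.stutter.map f).stutter = (p.map f).stutter
  set q := p.stutter with hq
  set L := p.word.length with hL
  have hword : (q.map f).stutter.word = (p.map f).stutter.word := by
    show Path.stutterWordAux (q.map f) (q.word.length) = Path.stutterWordAux (p.map f) L
    exact (Path.sw_map_stutter p f (le_refl L)).symm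
  refine Path.ext' hword ?_
  intro σ h1 h2
  -- h2 : σ <+: stutterWordAux (p.map f) L
  have h2' : σ <+: Path.stutterWordAux (p.map f) L := h2
  obtain ⟨n, hn, hne⟩ := Path.sw_surj (p.map f) (le_refl L) h2'
  -- right hand side
  have eR : (p.map f).stutter.fn ⟨σ, h2⟩ =
      (p.map f).fn ⟨p.word.take n, List.take_prefix _ _⟩ := by
    rw [Path.fn_congr _ hne.symm h2]
    exact Path.stutter_fn_eq (p.map f) hn _
  -- left hand side
  set n' := (Path.stutterWordAux p n).length with hn'
  have hσq : Path.stutterWordAux (q.map f) n' = σ := by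
    rw [← Path.sw_map_stutter p f hn]
    exact hne
  have hn'le : n' ≤ (q.map f).word.length := by
    show n' ≤ q.word.length
    exact (Path.sw_prefix p hn (le_refl L)).length_le
  have eL : (q.map f).stutter.fn ⟨σ, h1⟩ =
      (q.map f).fn ⟨q.word.take n', List.take_prefix _ _⟩ := by
    rw [Path.fn_congr _ hσq.symm h1]
    exact Path.stutter_fn_eq (q.map f) hn'le _
  have hqtake : q.word.take n' = Path.stutterWordAux p n :=
    (List.prefix_iff_eq_take.mp (Path.sw_prefix p hn (le_refl L))).symm
  have hqfn : q.fn ⟨q.word.take n', List.take_prefix _ _⟩ =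
      p.fn ⟨p.word.take n, List.take_prefix _ _⟩ := by
    rw [Path.fn_congr q hqtake (List.take_prefix _ _)]
    exact Path.stutter_fn_eq p hn _
  rw [eL, eR]
  show f (q.fn ⟨q.word.take n', List.take_prefix _ _⟩) =
    f (p.fn ⟨p.word.take n, List.take_prefix _ _⟩)
  rw [hqfn]

end PaperBB
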